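/- Let H ≤ K ≤ G be groups, where G is generated by a finite symmetric set S and K is generated by a finite symmetric set T. If the pair (G,H) has the rapid decay property (with respect to the word length of S on G), then the pair (K,H) has the rapid decay property (with respect to the word length of T on K). -/

import Mathlib

open scoped BigOperators

attribute [local instance] Classical.propDecidable

section Defs

variable {G : Type*} [Group G]

/-- Word length with respect to a generating set `S`. -/
noncomputable def wordLength (S : Set G) (x : G) : ℕ :=
  sInf {n | ∃ l : List G, (∀ s ∈ l, s ∈ S) ∧ l.length = n ∧ l.prod = x}

/-- Convolution of finitely supported functions:
`(f * ϕ) x = ∑ z, f z * ϕ (z⁻¹ * x)`. -/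
noncomputable def conv {k : Type*} [Semiring k] (f ϕ : G →₀ k) : G →₀ k :=
  f.sum fun z c => c • Finsupp.mapDomain (fun x => z * x) ϕ

/-- `n`-fold convolution power. -/
noncomputable def convPow {k : Type*} [Semiring k] (f : G →₀ k) : ℕ → G →₀ k
  | 0 => Finsupp.single 1 1
  | n + 1 => conv f (convPow f n)

/-- ℓ² norm of a finitely supported function. -/
noncomputable def l2Norm {α k : Type*} [NormedAddCommGroup k] (f : α →₀ k) : ℝ :=
  Real.sqrt (∑ x ∈ f.support, ‖f x‖ ^ 2)

/-- ℓ¹ norm of a finitely supported function. -/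
noncomputable def l1Norm {α k : Type*} [NormedAddCommGroup k] (f : α →₀ k) : ℝ :=
  ∑ x ∈ f.support, ‖f x‖

/-- The hybrid `(2,1)` norm with respect to the subgroup `H`:
`‖f‖_{(2,1)} = sqrt (∑_{gH ∈ G/H} (∑_{x ∈ gH} |f x|)²)`. -/
noncomputable def l21Norm (H : Subgroup G) {k : Type*} [NormedAddCommGroup k]
    (f : G →₀ k) : ℝ :=
  l2Norm (Finsupp.mapDomain (QuotientGroup.mk : G → G ⧸ H) (f.mapRange norm norm_zero))

/-- Hybrid operator norm `‖f‖_h`. -/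
noncomputable def hybridOpNorm (H : Subgroup G) (f : G →₀ ℂ) : ℝ :=
  sSup {c : ℝ | ∃ ϕ : G →₀ ℂ, l21Norm H ϕ ≤ 1 ∧ c = l21Norm H (conv f ϕ)}

/-- Regular operator norm `‖f‖_*`. -/
noncomputable def regOpNorm (f : G →₀ ℂ) : ℝ :=
  sSup {c : ℝ | ∃ ξ : G →₀ ℂ, l2Norm ξ ≤ 1 ∧ c = l2Norm (conv f ξ)}

/-- The quasi-regular representation:
`(λ_{G/H}(f) ξ)(gH) = ∑ z, f z * ξ (z⁻¹ g H)`. -/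
noncomputable def quasiReg (H : Subgroup G) (f : G →₀ ℂ) (ξ : (G ⧸ H) →₀ ℂ) :
    (G ⧸ H) →₀ ℂ :=
  f.sum fun z c => c • Finsupp.mapDomain (fun q => z • q) ξ

/-- Quasi-regular operator norm `‖λ_{G/H}(f)‖`. -/
noncomputable def quasiRegOpNorm (H : Subgroup G) (f : G →₀ ℂ) : ℝ :=
  sSup {c : ℝ | ∃ ξ : (G ⧸ H) →₀ ℂ, l2Norm ξ ≤ 1 ∧ c = l2Norm (quasiReg H f ξ)}

/-- Embed a real finitely supported function into the complex valued ones. -/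
noncomputable def toC {α : Type*} (f : α →₀ ℝ) : α →₀ ℂ :=
  f.mapRange Complex.ofReal Complex.ofReal_zero

/-- Pointwise weight of a function by `(1 + ℓ)^s`. -/
noncomputable def weight (S : Set G) (s : ℝ) (f : G →₀ ℂ) : G →₀ ℂ where
  support := f.support
  toFun x := ((((1 : ℝ) + (wordLength S x : ℝ)) ^ s : ℝ) : ℂ) * f x
  mem_support_toFun x := by
    simp only [Finsupp.mem_support_iff]
    have hpos : (0 : ℝ) < ((1 : ℝ) + (wordLength S x : ℝ)) ^ s :=
      Real.rpow_pos_of_pos (by positivity) s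
    constructor
    · intro hf h
      rcases mul_eq_zero.mp h with h1 | h2
      · exact hpos.ne' (by exact_mod_cast h1)
      · exact hf h2
    · intro h hf
      exact h (by rw [hf, mul_zero])

/-- The involution `f⋆ x = f x⁻¹`. -/
noncomputable def starFun {k : Type*} [Zero k] (f : G →₀ k) : G →₀ k :=
  Finsupp.equivMapDomain (Equiv.inv G) f

/-- Sum of the values of `g` over the subgroup `H`. -/
noncomputable def sumOverSubgroup (H : Subgroup G) (g : G →₀ ℝ) : ℝ :=
  ∑ x ∈ g.support.filter (fun x => x ∈ H), g x

/-- `f` is supported in the ball of radius `R` for the word length of `S`. -/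
def supportedInBall (S : Set G) (R : ℕ) {k : Type*} [Zero k] (f : G →₀ k) : Prop :=
  ∀ x ∈ f.support, wordLength S x ≤ R

/-- Rapid decay property for the pair `(G, H)`. -/
def PairRD (S : Set G) (H : Subgroup G) : Prop :=
  ∃ C : ℝ, ∃ D : ℕ, 0 ≤ C ∧ ∀ (R : ℕ) (f ϕ : G →₀ ℂ), supportedInBall S R f →
    l21Norm H (conv f ϕ) ≤ C * ((R : ℝ) + 1) ^ D * l21Norm H f * l21Norm H ϕ

/-- Rapid decay property for the group `G`. -/
def GroupRD (S : Set G) : Prop :=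
  ∃ C : ℝ, ∃ D : ℕ, 0 ≤ C ∧ ∀ (R : ℕ) (f ϕ : G →₀ ℂ), supportedInBall S R f →
    l2Norm (conv f ϕ) ≤ C * ((R : ℝ) + 1) ^ D * l2Norm f * l2Norm ϕ

/-- Polynomial growth of a subgroup for the induced length. -/
def polyGrowthSubgroup (S : Set G) (H : Subgroup G) : Prop :=
  ∃ C : ℝ, ∃ D : ℕ, 0 ≤ C ∧ ∀ R : ℕ,
    (Set.ncard {x : G | x ∈ H ∧ wordLength S x ≤ R} : ℝ) ≤ C * ((R : ℝ) + 1) ^ D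

/-- Polynomial growth of the coset space `G/H`. -/
def polyGrowthQuotient (S : Set G) (H : Subgroup G) : Prop :=
  ∃ C : ℝ, ∃ D : ℕ, 0 ≤ C ∧ ∀ R : ℕ,
    (Set.ncard ((QuotientGroup.mk : G → G ⧸ H) '' {x : G | wordLength S x ≤ R}) : ℝ) ≤
      C * ((R : ℝ) + 1) ^ D

/-- Co-amenability of `H` in `G`: Følner condition for the left action on `G/H`. -/
def Coamenable (H : Subgroup G) : Prop :=
  ∀ ε : ℝ, 0 < ε → ∀ F : Finset G, ∃ V : Finset (G ⧸ H), V.Nonempty ∧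
    ((symmDiff (Finset.image₂ (· • ·) F V) V).card : ℝ) ≤ ε * (V.card : ℝ)

/-- Matrix coefficient `⟨λ_{G/H}(γ) ξ, η⟩` of the quasi-regular representation
on `ℓ²(G/H)`. -/
noncomputable def qrCoeff (H : Subgroup G) (γ : G)
    (ξ η : lp (fun _ : G ⧸ H => ℂ) 2) : ℂ :=
  ∑' q : G ⧸ H, ξ (γ⁻¹ • q) * (starRingEnd ℂ) (η q)

/-- The spectral radius of the random walk induced on `G/H`:
`ρ = limsup P_{2n}(H,H)^{1/(2n)}`. -/
noncomputable def specRadQuot (H : Subgroup G) (μ : G →₀ ℝ) : ℝ :=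
  Filter.limsup (fun n : ℕ =>
    (sumOverSubgroup H (convPow μ (2 * n))) ^ ((1 : ℝ) / (2 * (n : ℝ)))) Filter.atTop

end Defs

section Aux
variable {G : Type*} [Group G]

lemma exists_word (S : Set G) (hSsym : ∀ s ∈ S, s⁻¹ ∈ S)
    (hSgen : Subgroup.closure S = ⊤) (x : G) :
    ∃ l : List G, (∀ s ∈ l, s ∈ S) ∧ l.prod = x := by
  have hx : x ∈ (Subgroup.closure S).toSubmonoid := by
    rw [hSgen]; trivial
  rw [Subgroup.closure_toSubmonoid] at hx
  obtain ⟨l, hl, hp⟩ := Submonoid.exists_list_of_mem_closure hx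
  refine ⟨l, fun s hs => ?_, hp⟩
  rcases hl s hs with h | h
  · exact h
  · simpa using hSsym _ (Set.mem_inv.mp h)

lemma wordLength_le_length (S : Set G) {x : G} {l : List G}
    (hl : ∀ s ∈ l, s ∈ S) (hprod : l.prod = x) :
    wordLength S x ≤ l.length :=
  Nat.sInf_le ⟨l, hl, rfl, hprod⟩

lemma exists_word_length (S : Set G) (hSsym : ∀ s ∈ S, s⁻¹ ∈ S)
    (hSgen : Subgroup.closure S = ⊤) (x : G) :
    ∃ l : List G, (∀ s ∈ l, s ∈ S) ∧ l.length = wordLength S x ∧ l.prod = x := by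
  obtain ⟨l, hl, hp⟩ := exists_word S hSsym hSgen x
  have hne : {n | ∃ l : List G, (∀ s ∈ l, s ∈ S) ∧ l.length = n ∧ l.prod = x}.Nonempty :=
    ⟨l.length, ⟨l, hl, rfl, hp⟩⟩
  exact Nat.sInf_mem hne

lemma wordLength_mul_le (S : Set G) (hSsym : ∀ s ∈ S, s⁻¹ ∈ S)
    (hSgen : Subgroup.closure S = ⊤) (x y : G) :
    wordLength S (x * y) ≤ wordLength S x + wordLength S y := by
  obtain ⟨l₁, hl₁, hlen₁, hp₁⟩ := exists_word_length S hSsym hSgen x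
  obtain ⟨l₂, hl₂, hlen₂, hp₂⟩ := exists_word_length S hSsym hSgen y
  have := wordLength_le_length S (x := x * y) (l := l₁ ++ l₂)
    (by intro s hs; rcases List.mem_append.mp hs with h | h
        exacts [hl₁ s h, hl₂ s h])
    (by rw [List.prod_append, hp₁, hp₂])
  simpa [hlen₁, hlen₂] using this

lemma wordLength_list_le (S : Set G) (hSsym : ∀ s ∈ S, s⁻¹ ∈ S)
    (hSgen : Subgroup.closure S = ⊤) (K : Subgroup G) (T : Set K) (M : ℕ)
    (hM : ∀ t ∈ T, wordLength S (t : G) ≤ M) :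
    ∀ l : List K, (∀ t ∈ l, t ∈ T) → wordLength S ((l.prod : K) : G) ≤ M * l.length := by
  intro l
  induction l with
  | nil =>
    intro _
    have : wordLength S ((1 : G)) ≤ 0 :=
      wordLength_le_length S (l := []) (by simp) (by simp)
    simpa using this
  | cons a tl ih =>
    intro hmem
    have h1 : ((((a :: tl).prod : K)) : G) = (a : G) * ((tl.prod : K) : G) := by
      simp
    rw [h1]
    calc wordLength S ((a : G) * ((tl.prod : K) : G))
        ≤ wordLength S (a : G) + wordLength S ((tl.prod : K) : G) :=
          wordLength_mul_le S hSsym hSgen _ _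
      _ ≤ M + M * tl.length := by
          gcongr
          · exact hM a (hmem a List.mem_cons_self)
          · exact ih fun t ht => hmem t (List.mem_cons_of_mem _ ht)
      _ = M * (a :: tl).length := by simp [List.length_cons]; ring

end Aux

section Aux2
open Finsupp
variable {G : Type*} [Group G]

lemma l2Norm_mapDomain_inj {α β k : Type*} [NormedAddCommGroup k] {ι : α → β}
    (hι : Function.Injective ι) (g : α →₀ k) :
    l2Norm (Finsupp.mapDomain ι g) = l2Norm g := by
  classical
  unfold l2Norm
  congr 1
  rw [Finsupp.mapDomain_support_of_injective hι]
  rw [Finset.sum_image (fun a _ b _ h => hι h)]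
  exact Finset.sum_congr rfl fun a _ => by rw [Finsupp.mapDomain_apply hι]

lemma mapRange_norm_mapDomain {α β k : Type*} [NormedAddCommGroup k] {ι : α → β}
    (hι : Function.Injective ι) (g : α →₀ k) :
    (Finsupp.mapDomain ι g).mapRange norm norm_zero
      = Finsupp.mapDomain ι (g.mapRange norm norm_zero) := by
  have h := Finsupp.embDomain_mapRange (⟨ι, hι⟩ : α ↪ β) norm g norm_zero
  rw [Finsupp.embDomain_eq_mapDomain, Finsupp.embDomain_eq_mapDomain] at h
  simp only [Function.Embedding.coeFn_mk] at h
  exact h.symm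

lemma quotMap_comm (K : Subgroup G) (H : Subgroup G)
    (j : K ⧸ (H.subgroupOf K) → G ⧸ H)
    (hj : ∀ x : K, j (QuotientGroup.mk x) = QuotientGroup.mk (x : G)) :
    (QuotientGroup.mk : G → G ⧸ H) ∘ ((↑·) : K → G)
      = j ∘ (QuotientGroup.mk : K → K ⧸ (H.subgroupOf K)) := by
  funext x
  simp [hj x]

lemma l21Norm_mapDomain (K : Subgroup G) (H : Subgroup G) (f : K →₀ ℂ) :
    l21Norm H (Finsupp.mapDomain ((↑·) : K → G) f) = l21Norm (H.subgroupOf K) f := by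
  classical
  have hι : Function.Injective ((↑·) : K → G) := Subtype.val_injective
  -- the induced map on quotients
  let j : K ⧸ (H.subgroupOf K) → G ⧸ H :=
    Quotient.map' ((↑·) : K → G) (by
      intro a b h
      rw [QuotientGroup.leftRel_apply] at h ⊢
      simpa [Subgroup.mem_subgroupOf] using h)
  have hj : ∀ x : K, j (QuotientGroup.mk x) = QuotientGroup.mk (x : G) := fun x => rfl
  have hjinj : Function.Injective j := by
    intro a b
    induction a using Quotient.inductionOn' with
    | h x =>
    induction b using Quotient.inductionOn' with
    | h y =>
    intro hxy
    have hxy' : (QuotientGroup.mk (x : G) : G ⧸ H) = QuotientGroup.mk (y : G) := by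
      simpa [hj] using hxy
    rw [QuotientGroup.eq] at hxy'
    have : x⁻¹ * y ∈ H.subgroupOf K := by
      rw [Subgroup.mem_subgroupOf]; simpa using hxy'
    exact Quotient.sound' ((QuotientGroup.leftRel_apply).mpr this)
  unfold l21Norm
  rw [mapRange_norm_mapDomain hι, ← Finsupp.mapDomain_comp,
    quotMap_comm K H j hj, Finsupp.mapDomain_comp, l2Norm_mapDomain_inj hjinj]

lemma conv_mapDomain (K : Subgroup G) (f ϕ : K →₀ ℂ) :
    conv (Finsupp.mapDomain ((↑·) : K → G) f) (Finsupp.mapDomain ((↑·) : K → G) ϕ)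
      = Finsupp.mapDomain ((↑·) : K → G) (conv f ϕ) := by
  classical
  unfold conv
  rw [Finsupp.mapDomain_sum,
    Finsupp.sum_mapDomain_index (by intro b; simp)
      (by intro b m₁ m₂; rw [add_smul])]
  refine Finsupp.sum_congr fun z _ => ?_
  rw [Finsupp.mapDomain_smul, ← Finsupp.mapDomain_comp, ← Finsupp.mapDomain_comp]
  congr 1

end Aux2

/-- if `H ≤ K ≤ G` and the pair `(G,H)` has rapid decay, then so
does the pair `(K,H)`. -/
theorem statement18 {G : Type*} [Group G] (S : Set G) (hSfin : S.Finite)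
    (hSsym : ∀ s ∈ S, s⁻¹ ∈ S) (hSgen : Subgroup.closure S = ⊤)
    (K : Subgroup G) (T : Set K) (hTfin : T.Finite)
    (hTsym : ∀ t ∈ T, t⁻¹ ∈ T) (hTgen : Subgroup.closure T = ⊤)
    (H : Subgroup G) (hHK : H ≤ K)
    (hRD : PairRD S H) :
    PairRD T (H.subgroupOf K) := by
  classical
  -- bound word length of K-elements in G
  obtain ⟨Mset, hMset⟩ : ∃ M : ℕ, ∀ t ∈ T, wordLength S (t : G) ≤ M := by
    refine ⟨hTfin.toFinset.sup fun t => wordLength S (t : G), fun t ht => ?_⟩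
    exact Finset.le_sup (f := fun t : K => wordLength S (t : G)) (hTfin.mem_toFinset.mpr ht)
  obtain ⟨C, D, hC, hRD'⟩ := hRD
  refine ⟨C * ((Mset : ℝ) + 1) ^ D, D, by positivity, ?_⟩
  intro R f ϕ hsupp
  have hι : Function.Injective ((↑·) : K → G) := Subtype.val_injective
  -- support bound for the extension
  have hsupp' : supportedInBall S (Mset * R) (Finsupp.mapDomain ((↑·) : K → G) f) := by
    intro x hx
    have hx' := Finsupp.mapDomain_support hx
    rw [Finset.mem_image] at hx'
    obtain ⟨y, hy, rfl⟩ := hx'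
    obtain ⟨l, hl, hlen, hp⟩ := exists_word_length T hTsym hTgen y
    have h1 : wordLength S ((y : K) : G) ≤ Mset * l.length := by
      have := wordLength_list_le S hSsym hSgen K T Mset hMset l hl
      rwa [hp] at this
    calc wordLength S ((y : K) : G) ≤ Mset * l.length := h1
      _ = Mset * wordLength T y := by rw [hlen]
      _ ≤ Mset * R := Nat.mul_le_mul_left _ (hsupp y hy)
  have key := hRD' (Mset * R) (Finsupp.mapDomain ((↑·) : K → G) f)
    (Finsupp.mapDomain ((↑·) : K → G) ϕ) hsupp'
  rw [conv_mapDomain, l21Norm_mapDomain, l21Norm_mapDomain, l21Norm_mapDomain] at key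
  refine key.trans ?_
  have hfn : 0 ≤ l21Norm (H.subgroupOf K) f := Real.sqrt_nonneg _
  have hpn : 0 ≤ l21Norm (H.subgroupOf K) ϕ := Real.sqrt_nonneg _
  have hb : ((Mset * R : ℕ) : ℝ) + 1 ≤ ((Mset : ℝ) + 1) * ((R : ℝ) + 1) := by
    push_cast
    nlinarith [Nat.cast_nonneg (α := ℝ) Mset, Nat.cast_nonneg (α := ℝ) R]
  have hb' : (((Mset * R : ℕ) : ℝ) + 1) ^ D ≤ (((Mset : ℝ) + 1) * ((R : ℝ) + 1)) ^ D := by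
    gcongr
  calc C * (((Mset * R : ℕ) : ℝ) + 1) ^ D * l21Norm (H.subgroupOf K) f *
        l21Norm (H.subgroupOf K) ϕ
      ≤ C * ((((Mset : ℝ) + 1) * ((R : ℝ) + 1)) ^ D) * l21Norm (H.subgroupOf K) f *
        l21Norm (H.subgroupOf K) ϕ := by gcongr
    _ = C * ((Mset : ℝ) + 1) ^ D * ((R : ℝ) + 1) ^ D * l21Norm (H.subgroupOf K) f *
        l21Norm (H.subgroupOf K) ϕ := by rw [mul_pow]; ring
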